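/- Let E₁, E₂, θ, R be positive real numbers and let β > 1. Then the function g : [0,1] → ℝ given by g(λ) = E₁ * (λ*θ/R)^β + E₂ * ((1−λ)*θ/R)^β attains its minimum on [0,1] at the unique point λ* = 1 / (1 + (E₁/E₂)^(1/(β−1))), and the minimum value equals (E₁ * E₂^(β/(β−1)) + E₁^(β/(β−1)) * E₂) / (E₁^(1/(β−1)) + E₂^(1/(β−1)))^β * (θ/R)^β. -/

import Mathlib

open Real

/-- Strict tangent line inequality for rpow, `β > 1`. -/
private lemma tangent_rpow_lt {y x β : ℝ} (hy : 0 < y) (hx : 0 ≤ x) (hxy : x ≠ y)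
    (hβ : 1 < β) :
    y ^ β + β * (y ^ (β - 1) * (x - y)) < x ^ β := by
  have ht : -1 ≤ x / y - 1 := by
    have : 0 ≤ x / y := div_nonneg hx hy.le
    linarith
  have ht' : x / y - 1 ≠ 0 := by
    intro h
    apply hxy
    have h1 : x / y = 1 := by linarith
    field_simp at h1
    linarith
  have hb := one_add_mul_self_lt_rpow_one_add ht ht' hβ
  rw [add_sub_cancel] at hb
  have hyβ : (0:ℝ) < y ^ β := Real.rpow_pos_of_pos hy β
  have h2 : (x / y) ^ β = x ^ β / y ^ β := Real.div_rpow hx hy.le β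
  have h3 : y ^ (β - 1) = y ^ β / y := by
    rw [Real.rpow_sub hy, Real.rpow_one]
  have hmul := mul_lt_mul_of_pos_right hb hyβ
  rw [h2, div_mul_cancel₀ _ hyβ.ne'] at hmul
  calc y ^ β + β * (y ^ (β - 1) * (x - y))
      = (1 + β * (x / y - 1)) * y ^ β := by
        rw [h3]; field_simp
    _ < x ^ β := hmul

private lemma tangent_rpow_le {y x β : ℝ} (hy : 0 < y) (hx : 0 ≤ x) (hβ : 1 < β) :
    y ^ β + β * (y ^ (β - 1) * (x - y)) ≤ x ^ β := by
  by_cases h : x = y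
  · subst h; simp
  · exact (tangent_rpow_lt hy hx h hβ).le

/-- Optimal recombination scheme for `β > 1`: the merging cost
`g λ = E₁ (λθ/R)^β + E₂ ((1-λ)θ/R)^β` on `[0,1]` is minimized at the unique point
`λ* = 1/(1 + (E₁/E₂)^(1/(β-1)))`, with the stated minimal value. -/
theorem optimal_recombination_beta_gt_one
    (E₁ E₂ θ R β : ℝ) (hE₁ : 0 < E₁) (hE₂ : 0 < E₂) (hθ : 0 < θ) (hR : 0 < R)
    (hβ : 1 < β) :
    let lamStar : ℝ := 1 / (1 + (E₁ / E₂) ^ (1 / (β - 1)))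
    let g : ℝ → ℝ := fun lam => E₁ * (lam * θ / R) ^ β + E₂ * ((1 - lam) * θ / R) ^ β
    lamStar ∈ Set.Icc (0 : ℝ) 1 ∧
      (∀ lam ∈ Set.Icc (0 : ℝ) 1, g lamStar ≤ g lam) ∧
      (∀ lam ∈ Set.Icc (0 : ℝ) 1, g lam = g lamStar → lam = lamStar) ∧
      g lamStar =
        (E₁ * E₂ ^ (β / (β - 1)) + E₁ ^ (β / (β - 1)) * E₂) /
            (E₁ ^ (1 / (β - 1)) + E₂ ^ (1 / (β - 1))) ^ β * (θ / R) ^ β := by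
  intro lamStar g
  have hβ1 : (0:ℝ) < β - 1 := by linarith
  set s : ℝ := 1 / (β - 1) with hs
  have hs1 : s * (β - 1) = 1 := by rw [hs, one_div, inv_mul_cancel₀ hβ1.ne']
  set ρ : ℝ := (E₁ / E₂) ^ s with hρdef
  have hρ : 0 < ρ := Real.rpow_pos_of_pos (div_pos hE₁ hE₂) s
  have h1ρ : 0 < 1 + ρ := by linarith
  have hls : lamStar = 1 / (1 + ρ) := rfl
  have hls_pos : 0 < lamStar := by rw [hls]; positivity
  have hls_lt : lamStar < 1 := by
    rw [hls, div_lt_one h1ρ]; linarith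
  have hone_sub : 1 - lamStar = ρ / (1 + ρ) := by
    rw [hls]; field_simp; ring
  have hone_sub_pos : 0 < 1 - lamStar := by rw [hone_sub]; positivity
  set k : ℝ := θ / R with hk
  have hkpos : 0 < k := div_pos hθ hR
  have hg : ∀ lam : ℝ, g lam = E₁ * (lam * k) ^ β + E₂ * ((1 - lam) * k) ^ β := by
    intro lam
    simp only [g, hk, mul_div_assoc]
  -- critical point identity
  have hρpow : ρ ^ (β - 1) = E₁ / E₂ := by
    rw [hρdef, ← Real.rpow_mul (div_pos hE₁ hE₂).le, hs1, Real.rpow_one]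
  have hkey : E₁ * lamStar ^ (β - 1) = E₂ * (1 - lamStar) ^ (β - 1) := by
    rw [hls, hone_sub, Real.div_rpow hρ.le h1ρ.le, Real.div_rpow zero_le_one h1ρ.le,
      Real.one_rpow, hρpow]
    have h1ρβ : (0:ℝ) < (1 + ρ) ^ (β - 1) := Real.rpow_pos_of_pos h1ρ _
    field_simp
  have hkey' : E₁ * (lamStar * k) ^ (β - 1) = E₂ * ((1 - lamStar) * k) ^ (β - 1) := by
    rw [Real.mul_rpow hls_pos.le hkpos.le, Real.mul_rpow hone_sub_pos.le hkpos.le,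
      ← mul_assoc, ← mul_assoc, hkey]
  -- strict minimality
  have main : ∀ lam ∈ Set.Icc (0:ℝ) 1, lam ≠ lamStar → g lamStar < g lam := by
    intro lam hlam hne
    obtain ⟨h0, h1⟩ := hlam
    have hx1 : 0 ≤ lam * k := by positivity
    have hx2 : 0 ≤ (1 - lam) * k := by nlinarith
    have hy1 : 0 < lamStar * k := by positivity
    have hy2 : 0 < (1 - lamStar) * k := by positivity
    have hne1 : lam * k ≠ lamStar * k := fun h => hne (mul_right_cancel₀ hkpos.ne' h)
    have t1 := tangent_rpow_lt hy1 hx1 hne1 hβ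
    have t2 := tangent_rpow_le hy2 hx2 hβ
    have e1 := mul_lt_mul_of_pos_left t1 hE₁
    have e2 := mul_le_mul_of_nonneg_left t2 hE₂.le
    rw [hg lam, hg lamStar]
    have hsum : E₁ * ((lamStar*k)^β + β * ((lamStar*k)^(β-1) * (lam*k - lamStar*k)))
        + E₂ * (((1-lamStar)*k)^β + β * (((1-lamStar)*k)^(β-1) * ((1-lam)*k - (1-lamStar)*k)))
        = E₁ * (lamStar*k)^β + E₂ * ((1-lamStar)*k)^β := by
      linear_combination β * (lam*k - lamStar*k) * hkey'
    linarith
  refine ⟨⟨hls_pos.le, hls_lt.le⟩, ?_, ?_, ?_⟩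
  · intro lam hlam
    by_cases h : lam = lamStar
    · subst h; exact le_refl _
    · exact (main lam hlam h).le
  · intro lam hlam heq
    by_contra h
    exact absurd heq (main lam hlam h).ne'
  -- value computation
  · set A : ℝ := E₁ ^ s with hA
    set B : ℝ := E₂ ^ s with hB
    have hApos : 0 < A := Real.rpow_pos_of_pos hE₁ s
    have hBpos : 0 < B := Real.rpow_pos_of_pos hE₂ s
    have hABpos : 0 < A + B := by linarith
    have hρAB : ρ = A / B := Real.div_rpow hE₁.le hE₂.le s
    have hBne : B ≠ 0 := hBpos.ne'
    have hABne : A + B ≠ 0 := hABpos.ne'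
    have h1AB : 1 + A / B = (A + B) / B := by field_simp; ring
    have hlsAB : lamStar = B / (A + B) := by
      rw [hls, hρAB, h1AB, one_div_div]
    have hosAB : 1 - lamStar = A / (A + B) := by
      rw [hlsAB]; field_simp; ring
    have hsβ : s * β = β / (β - 1) := by
      rw [hs, div_mul_eq_mul_div, one_mul]
    have hBβ : B ^ β = E₂ ^ (β / (β - 1)) := by
      rw [hB, ← Real.rpow_mul hE₂.le, hsβ]
    have hAβ : A ^ β = E₁ ^ (β / (β - 1)) := by
      rw [hA, ← Real.rpow_mul hE₁.le, hsβ]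
    rw [hg lamStar, Real.mul_rpow hls_pos.le hkpos.le,
      Real.mul_rpow hone_sub_pos.le hkpos.le, hosAB, hlsAB,
      Real.div_rpow hBpos.le hABpos.le, Real.div_rpow hApos.le hABpos.le,
      hBβ, hAβ]
    have hABβ : (0:ℝ) < (A + B) ^ β := Real.rpow_pos_of_pos hABpos β
    field_simp
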